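/- arXiv:2502.00364 — 2 statements merged into one kernel-verified Lean document; each statement's English description precedes it below -/
import Mathlib

section
/- For a CS-path endpoint with θ ∈ (0, π) and āθ < L, the polar angle λ of the endpoint satisfies λ ≤ θ ≤ λ + π; equivalently θ − λ ∈ [0, π]. -/
open Real Complex

/-- For a CS-path endpoint with `θ ∈ (0, π)` and `ā θ < L`, the polar angle `λ`
of the endpoint satisfies `λ ≤ θ ≤ λ + π`. -/
theorem cspath_polar_angle_bounds (L abar θ : ℝ) (habar : 0 < abar)
    (hθ0 : 0 < θ) (hθπ : θ < Real.pi) (h : abar * θ < L) :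
    let Fx : ℝ := abar * Real.sin θ + (L - abar * θ) * Real.cos θ
    let Fy : ℝ := abar * (1 - Real.cos θ) + (L - abar * θ) * Real.sin θ
    let lam : ℝ := Complex.arg ((Fx : ℂ) + (Fy : ℂ) * Complex.I)
    lam ≤ θ ∧ θ ≤ lam + Real.pi := by
  intro Fx Fy lam
  set z : ℂ := (Fx : ℂ) + (Fy : ℂ) * Complex.I with hz
  have hsin : 0 < Real.sin θ := Real.sin_pos_of_pos_of_lt_pi hθ0 hθπ
  have hcos : Real.cos θ < 1 := by
    have h1 : Real.cos θ < Real.cos 0 := by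
      apply Real.cos_lt_cos_of_nonneg_of_le_pi le_rfl (le_of_lt hθπ) hθ0
    simpa using h1
  have hL : 0 < L - abar * θ := by linarith
  have hFy : 0 < Fy := by
    have h1 : 0 ≤ abar * (1 - Real.cos θ) := by nlinarith
    have h2 : 0 < (L - abar * θ) * Real.sin θ := by positivity
    simp only [Fy]; linarith
  have him : z.im = Fy := by simp [hz]
  have hre : z.re = Fx := by simp [hz]
  have hz0 : z ≠ 0 := by
    intro h0
    rw [h0] at him
    simp at him
    linarith
  have habs : 0 < ‖z‖ := by
    exact norm_pos_iff.mpr hz0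
  have hsinlam : Real.sin lam = Fy / ‖z‖ := by
    rw [show lam = Complex.arg z from rfl, Complex.sin_arg, him]
  have hcoslam : Real.cos lam = Fx / ‖z‖ := by
    rw [show lam = Complex.arg z from rfl, Complex.cos_arg hz0, hre]
  have hsinlam_pos : 0 < Real.sin lam := by
    rw [hsinlam]; positivity
  -- lam ∈ (0, π)
  have hlam_le : lam ≤ Real.pi := Complex.arg_le_pi z
  have hlam_gt : -Real.pi < lam := Complex.neg_pi_lt_arg z
  have hlam_pos : 0 < lam := by
    by_contra hc
    push_neg at hc
    have : Real.sin lam ≤ 0 := by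
      have := Real.sin_nonneg_of_nonneg_of_le_pi (x := -lam) (by linarith) (by linarith)
      rw [Real.sin_neg] at this
      linarith
    linarith
  have hlam_lt_pi : lam < Real.pi := by
    rcases lt_or_eq_of_le hlam_le with h' | h'
    · exact h'
    · exfalso; rw [h', Real.sin_pi] at hsinlam_pos; linarith
  constructor
  · -- lam ≤ θ
    by_contra hc
    push_neg at hc
    have hd : 0 < lam - θ := by linarith
    have hd2 : lam - θ < Real.pi := by linarith
    have hsd : 0 < Real.sin (lam - θ) := Real.sin_pos_of_pos_of_lt_pi hd hd2
    rw [Real.sin_sub, hsinlam, hcoslam] at hsd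
    have key : Fy * Real.cos θ - Fx * Real.sin θ = abar * (Real.cos θ - 1) := by
      simp only [Fx, Fy]
      nlinarith [Real.sin_sq_add_cos_sq θ]
    have : 0 < Fy * Real.cos θ - Fx * Real.sin θ := by
      have := mul_pos hsd habs
      have hne : ‖z‖ ≠ 0 := ne_of_gt habs
      field_simp at this
      linarith [this]
    nlinarith
  · linarith
end

section
/- If the target lies on the boundary of the CBEZ, its distance to the shifted pursuer position equals the cochleoid radius: with P' = P − μR(cos ψ_T, sin ψ_T) and λ' the polar angle of T − P', membership of T in the closed CBEZ complement is characterized by ‖T − P'‖ ≥ (L/(λ' − ψ_P))·sin(λ' − ψ_P), and this constraint function is invariant under simultaneous rotation of T, ψ_T, and ψ_P about P by any angle φ. -/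
open Real Complex

/-- The shifted pursuer position for the CBEZ: `P' = P - μ R e^{i ψ_T}`. -/
noncomputable def shiftedPursuer (P : ℂ) (μ R ψT : ℝ) : ℂ :=
  P - (μ * R : ℂ) * Complex.exp ((ψT : ℂ) * Complex.I)

/-- The relative polar angle `α = λ' - ψ_P` of the target w.r.t. the shifted
pursuer position, reduced to `(-π, π]`. -/
noncomputable def relAngle (P T : ℂ) (μ R ψT ψP : ℝ) : ℝ :=
  Complex.arg ((T - shiftedPursuer P μ R ψT) * Complex.exp (-(ψP : ℂ) * Complex.I))

/-- The CBEZ: C-reachability region of radius `L (sin α)/α` about `P'`. -/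
noncomputable def CBEZ (P : ℂ) (μ R ψT ψP L : ℝ) : Set ℂ :=
  {T : ℂ | ‖T - shiftedPursuer P μ R ψT‖
    < L / relAngle P T μ R ψT ψP * Real.sin (relAngle P T μ R ψT ψP)}

lemma rot_rel (P T : ℂ) (μ R ψT φ : ℝ) :
    ((T - P) * Complex.exp ((φ : ℂ) * Complex.I) + P) - shiftedPursuer P μ R (ψT + φ)
      = (T - shiftedPursuer P μ R ψT) * Complex.exp ((φ : ℂ) * Complex.I) := by
  simp only [shiftedPursuer, Complex.ofReal_add]
  rw [show ((ψT : ℂ) + φ) * Complex.I = ψT * Complex.I + φ * Complex.I by ring,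
    Complex.exp_add]
  ring

/-- Membership in the closed complement of the CBEZ is characterized by
`‖T - P'‖ ≥ (L/(λ' - ψ_P)) sin(λ' - ψ_P)`, and this constraint is invariant under
simultaneous rotation of `T`, `ψ_T` and `ψ_P` about `P` by any angle `φ`. -/
theorem cbez_constraint_rotation_invariant (P T : ℂ) (μ R ψT ψP L φ : ℝ)
    (hμ : 0 < μ) (hR : 0 < R) (hL : 0 < L) :
    (T ∉ CBEZ P μ R ψT ψP L ↔
      ‖T - shiftedPursuer P μ R ψT‖
        ≥ L / relAngle P T μ R ψT ψP * Real.sin (relAngle P T μ R ψT ψP)) ∧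
    (‖((T - P) * Complex.exp ((φ : ℂ) * Complex.I) + P)
        - shiftedPursuer P μ R (ψT + φ)‖
      = ‖T - shiftedPursuer P μ R ψT‖) ∧
    (relAngle P ((T - P) * Complex.exp ((φ : ℂ) * Complex.I) + P) μ R (ψT + φ) (ψP + φ)
      = relAngle P T μ R ψT ψP) ∧
    (((T - P) * Complex.exp ((φ : ℂ) * Complex.I) + P) ∉ CBEZ P μ R (ψT + φ) (ψP + φ) L ↔
      T ∉ CBEZ P μ R ψT ψP L) := by
  have habs : ‖((T - P) * Complex.exp ((φ : ℂ) * Complex.I) + P)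
        - shiftedPursuer P μ R (ψT + φ)‖
      = ‖T - shiftedPursuer P μ R ψT‖ := by
    rw [rot_rel]
    simp [Complex.norm_exp]
  have hrel : relAngle P ((T - P) * Complex.exp ((φ : ℂ) * Complex.I) + P) μ R (ψT + φ) (ψP + φ)
      = relAngle P T μ R ψT ψP := by
    unfold relAngle
    rw [rot_rel]
    congr 1
    rw [mul_assoc, ← Complex.exp_add]
    congr 1
    push_cast
    ring
  refine ⟨?_, habs, hrel, ?_⟩
  · simp [CBEZ, Set.mem_setOf_eq, not_lt, ge_iff_le]
  · simp only [CBEZ, Set.mem_setOf_eq, not_lt, habs, hrel]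
end
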